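/- For even n = 2k with k ≥ 3, the n-th constrained quantization error for the uniform distribution on [0,2] with constraint S₁ ∪ S₂ is Vₙ = (1/48)(12 + 1/k²) = 1/4 + 1/(48k²). -/

import Mathlib

open scoped Classical

/-- Distortion error of a finite set w.r.t. the uniform distribution on the base `[0,2]`,
using the squared Euclidean distance `rho((x,0),(a,b)) = (x-a)^2 + b^2`. -/
noncomputable def distortion (α : Finset (ℝ × ℝ)) : ℝ :=
  (1/2) * ∫ x in (0:ℝ)..2, sInf ((fun p : ℝ × ℝ => (x - p.1)^2 + p.2^2) '' (α : Set (ℝ × ℝ)))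

/-- The side `OB` of the equilateral triangle `O(0,0)`, `A(2,0)`, `B(1,√3)`. -/
def S1 : Set (ℝ × ℝ) := {p | ∃ x : ℝ, 0 ≤ x ∧ x ≤ 1 ∧ p = (x, Real.sqrt 3 * x)}

/-- The side `AB` of the equilateral triangle. -/
def S2 : Set (ℝ × ℝ) := {p | ∃ x : ℝ, 1 ≤ x ∧ x ≤ 2 ∧ p = (x, -(Real.sqrt 3) * (x - 2))}

/-- The `n`-th constrained quantization error with constraint `S1 ∪ S2`. -/
noncomputable def V (n : ℕ) : ℝ :=
  sInf {v | ∃ α : Finset (ℝ × ℝ), ↑α ⊆ S1 ∪ S2 ∧ 1 ≤ α.card ∧ α.card ≤ n ∧ v = distortion α}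

-- continuity of finite inf of continuous family
lemma cont_inf' {ι : Type*} (s : Finset ι) (hs : s.Nonempty) (F : ι → ℝ → ℝ)
    (h : ∀ i, Continuous (F i)) :
    Continuous (fun x => s.inf' hs (fun i => F i x)) := by
  induction hs using Finset.Nonempty.cons_induction with
  | singleton i => simpa using h i
  | cons i s hi hs ih =>
      have e : ∀ x, (Finset.cons i s hi).inf' (Finset.cons_nonempty hi) (fun j => F j x)
          = F i x ⊓ s.inf' hs (fun j => F j x) := fun x => Finset.inf'_cons (H := hs) _
      simp only [e]
      exact (h i).min ih

lemma cont_sInf_image {ι : Type*} (s : Finset ι) (hs : s.Nonempty) (F : ι → ℝ → ℝ)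
    (h : ∀ i, Continuous (F i)) :
    Continuous (fun x => sInf ((fun i => F i x) '' (s : Set ι))) := by
  have key : ∀ x, sInf ((fun i => F i x) '' (s : Set ι)) = s.inf' hs (fun i => F i x) := by
    intro x
    rw [Finset.inf'_eq_csInf_image]
  simp only [key]
  exact cont_inf' s hs F h

-- antiderivative computation
lemma integral_sq_add_const (c d a e : ℝ) :
    ∫ x in c..d, ((x - a)^2 + e) = ((d-a)^3 - (c-a)^3)/3 + e*(d - c) := by
  have h : ∀ x : ℝ, HasDerivAt (fun y => (y-a)^3/3 + e*y) ((x - a)^2 + e) x := by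
    intro x
    have h1 : HasDerivAt (fun y : ℝ => (y - a)) 1 x := (hasDerivAt_id x).sub_const a
    have h2 : HasDerivAt (fun y : ℝ => (y - a)^3) (3 * (x-a)^2 * 1) x := by
      simpa using (h1.fun_pow 3)
    have h3 : HasDerivAt (fun y : ℝ => (y - a)^3/3) ((x-a)^2) x := by
      have := h2.div_const 3
      simpa using this.congr_deriv (by ring)
    have h4 : HasDerivAt (fun y : ℝ => e*y) e x := by
      simpa using (hasDerivAt_id x).const_mul e
    simpa using h3.fun_add h4
  rw [intervalIntegral.integral_eq_sub_of_hasDerivAt (fun x _ => h x)]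
  · ring
  · apply Continuous.intervalIntegrable; continuity

lemma sum_range_cast (n : ℕ) : ∑ j ∈ Finset.range n, (j:ℝ) = n*(n-1)/2 := by
  induction n with
  | zero => simp
  | succ n ih => rw [Finset.sum_range_succ, ih]; push_cast; ring

lemma sum_range_cast_sq (n : ℕ) : ∑ j ∈ Finset.range n, (j:ℝ)^2 = n*(n-1)*(2*n-1)/6 := by
  induction n with
  | zero => simp
  | succ n ih => rw [Finset.sum_range_succ, ih]; push_cast; ring

noncomputable def del (Z : Finset ℝ) (x : ℝ) : ℝ := sInf ((fun z => (x - z)^2) '' (Z : Set ℝ))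

lemma cubic1 {A B : ℝ} (h : A ≤ B) (a : ℝ) :
    (B-A)^3/12 ≤ ((B-a)^3 - (A-a)^3)/3 := by
  nlinarith [mul_nonneg (sub_nonneg.2 h) (sq_nonneg (B+A-2*a)), sq_nonneg (B-A)]

lemma cubic2 {a b m : ℝ} (ha : 0 ≤ a) (hb : 0 ≤ b) (hm : 1 ≤ m) :
    (a+b)^3/(12*(m+1)^2) ≤ a^3/(12*m^2) + b^3/12 := by
  have hm0 : (0:ℝ) < m := by linarith
  have key : (m+1)^2*(a^3+m^2*b^3) - m^2*(a+b)^3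
      = (a-m*b)^2*((2*m+1)*a+(m^2+2*m)*b) := by ring
  rw [div_add_div _ _ (by positivity) (by positivity), div_le_div_iff₀ (by positivity) (by positivity)]
  nlinarith [mul_nonneg (sq_nonneg (a-m*b)) (by nlinarith : (0:ℝ) ≤ (2*m+1)*a+(m^2+2*m)*b)]

lemma cont_del (Z : Finset ℝ) (hne : Z.Nonempty) : Continuous (del Z) := by
  apply cont_sInf_image Z hne (fun z x => (x - z)^2)
  intro z; continuity

lemma del_le {Z : Finset ℝ} {z : ℝ} (hz : z ∈ Z) (x : ℝ) : del Z x ≤ (x - z)^2 :=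
  csInf_le (Z.finite_toSet.image _).bddBelow ⟨z, hz, rfl⟩

lemma le_del {Z : Finset ℝ} (hne : Z.Nonempty) {x b : ℝ} (h : ∀ z ∈ Z, b ≤ (x - z)^2) :
    b ≤ del Z x := by
  apply le_csInf (hne.to_set.image _)
  rintro y ⟨z, hz, rfl⟩
  exact h z hz

lemma integral_sq_shift (c d a : ℝ) :
    ∫ x in c..d, (x - a)^2 = ((d-a)^3 - (c-a)^3)/3 := by
  have h : ∀ x : ℝ, HasDerivAt (fun y => (y-a)^3/3) ((x - a)^2) x := by
    intro x
    have h1 : HasDerivAt (fun y : ℝ => (y - a)) 1 x := (hasDerivAt_id x).sub_const a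
    have h2 : HasDerivAt (fun y : ℝ => (y - a)^3) (3 * (x-a)^2 * 1) x := by
      simpa using (h1.fun_pow 3)
    have h3 := h2.div_const 3
    refine h3.congr_deriv ?_
    ring
  rw [intervalIntegral.integral_eq_sub_of_hasDerivAt (fun x _ => h x)]
  · ring
  · apply Continuous.intervalIntegrable; continuity

lemma quantizer_bound : ∀ (n : ℕ) (Z : Finset ℝ), Z.card = n + 1 →
    ∀ A B : ℝ, A ≤ B →
    (B-A)^3/(12*((n:ℝ)+1)^2) ≤ ∫ x in A..B, del Z x := by
  intro n
  induction n with
  | zero =>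
      intro Z hcard A B hAB
      obtain ⟨z, rfl⟩ := Finset.card_eq_one.1 hcard
      have : ∀ x, del {z} x = (x - z)^2 := by
        intro x; simp [del]
      simp only [this]
      rw [integral_sq_shift]
      simpa using cubic1 hAB z
  | succ n ih =>
      intro Z hcard A B hAB
      have hne : Z.Nonempty := Finset.card_pos.1 (by omega)
      set zs := Z.max' hne with hzs
      set Z' := Z.erase zs with hZ'
      have hcard' : Z'.card = n + 1 := by
        rw [hZ', Finset.card_erase_of_mem (Z.max'_mem hne), hcard]
        omega
      have hne' : Z'.Nonempty := Finset.card_pos.1 (by omega)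
      set w := Z'.max' hne' with hw
      have hwzs : w ≤ zs := Z.le_max' w (Finset.mem_of_mem_erase (Z'.max'_mem hne'))
      set m := (w + zs)/2 with hm
      set c := max A (min B m) with hc
      have hAc : A ≤ c := le_max_left _ _
      have hcB : c ≤ B := max_le hAB (min_le_left _ _)
      have hintZ : ∀ u v : ℝ, IntervalIntegrable (del Z) MeasureTheory.volume u v :=
        fun u v => (cont_del Z hne).intervalIntegrable u v
      have hintZ' : ∀ u v : ℝ, IntervalIntegrable (del Z') MeasureTheory.volume u v :=
        fun u v => (cont_del Z' hne').intervalIntegrable u v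
      -- left piece
      have hleft : (c-A)^3/(12*((n:ℝ)+1)^2) ≤ ∫ x in A..c, del Z x := by
        rcases eq_or_lt_of_le hAc with h | h
        · rw [← h]; simp
        · have hcm : c ≤ m := by
            rcases le_or_gt m A with h1 | h1
            · exfalso
              have hceq : c = A := by
                rw [hc, max_eq_left]
                exact le_trans (min_le_right _ _) h1
              rw [hceq] at h; exact lt_irrefl A h
            · rw [hc, max_le_iff]
              exact ⟨le_of_lt h1, min_le_right _ _⟩
          have hptw : ∀ x ∈ Set.Icc A c, del Z' x ≤ del Z x := by
            intro x hx
            apply le_del hne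
            intro z hz
            rcases eq_or_ne z zs with rfl | hzne
            · have h1 : del Z' x ≤ (x - w)^2 := del_le (Z'.max'_mem hne') x
              have hxm : x ≤ m := le_trans hx.2 hcm
              nlinarith
            · exact del_le (Finset.mem_erase.2 ⟨hzne, hz⟩) x
          calc (c-A)^3/(12*((n:ℝ)+1)^2) ≤ ∫ x in A..c, del Z' x := ih Z' hcard' A c hAc
            _ ≤ ∫ x in A..c, del Z x :=
                intervalIntegral.integral_mono_on hAc (hintZ' A c) (hintZ A c) hptw
      -- right piece
      have hright : (B-c)^3/12 ≤ ∫ x in c..B, del Z x := by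
        rcases eq_or_lt_of_le hcB with h | h
        · rw [h]; simp
        · have hmc : m ≤ c := by
            rcases le_or_gt B m with h1 | h1
            · exfalso
              have hceq : c = B := by
                rw [hc, min_eq_left h1, max_eq_right hAB]
              rw [hceq] at h; exact lt_irrefl B h
            · rw [hc, min_eq_right (le_of_lt h1)]
              exact le_max_right _ _
          have hptw : ∀ x ∈ Set.Icc c B, (x - zs)^2 ≤ del Z x := by
            intro x hx
            apply le_del hne
            intro z hz
            rcases eq_or_ne z zs with rfl | hzne
            · exact le_rfl
            · have hzw : z ≤ w := Z'.le_max' z (Finset.mem_erase.2 ⟨hzne, hz⟩)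
              have hxm : m ≤ x := le_trans hmc hx.1
              nlinarith
          calc (B-c)^3/12 ≤ ((B-zs)^3 - (c-zs)^3)/3 := cubic1 hcB zs
            _ = ∫ x in c..B, (x - zs)^2 := (integral_sq_shift c B zs).symm
            _ ≤ ∫ x in c..B, del Z x := by
                apply intervalIntegral.integral_mono_on hcB _ (hintZ c B) hptw
                apply Continuous.intervalIntegrable; continuity
      have hsplit : (∫ x in A..c, del Z x) + ∫ x in c..B, del Z x = ∫ x in A..B, del Z x :=
        intervalIntegral.integral_add_adjacent_intervals (hintZ A c) (hintZ c B)
      have hcub := cubic2 (a := c - A) (b := B - c) (m := (n:ℝ)+1)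
        (by linarith) (by linarith) (by norm_num : (1:ℝ) ≤ (n:ℝ)+1)
      have : ((n:ℝ)+1+1) = ((n+1:ℕ):ℝ)+1 := by push_cast; ring
      calc (B-A)^3/(12*(((n+1:ℕ):ℝ)+1)^2)
          = ((c-A)+(B-c))^3/(12*(((n:ℝ)+1)+1)^2) := by push_cast; ring_nf
        _ ≤ (c-A)^3/(12*((n:ℝ)+1)^2) + (B-c)^3/12 := hcub
        _ ≤ (∫ x in A..c, del Z x) + ∫ x in c..B, del Z x := add_le_add hleft hright
        _ = ∫ x in A..B, del Z x := hsplit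

lemma sqrt3_sq : (Real.sqrt 3)^2 = 3 := Real.sq_sqrt (by norm_num)

lemma integral_w_sq : ∫ x in (0:ℝ)..2, (min x (2-x))^2 = 2/3 := by
  have h1 : ∫ x in (0:ℝ)..1, (min x (2-x))^2 = 1/3 := by
    rw [show (1:ℝ)/3 = ((1-(0:ℝ))^3 - ((0:ℝ)-0)^3)/3 by norm_num, ← integral_sq_shift]
    apply intervalIntegral.integral_congr
    intro x hx
    rw [Set.uIcc_of_le (by norm_num : (0:ℝ) ≤ 1)] at hx
    show (min x (2-x))^2 = (x-0)^2
    have : min x (2-x) = x := min_eq_left (by linarith [hx.1, hx.2])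
    rw [this]; ring
  have h2 : ∫ x in (1:ℝ)..2, (min x (2-x))^2 = 1/3 := by
    rw [show (1:ℝ)/3 = ((2-(2:ℝ))^3 - ((1:ℝ)-2)^3)/3 by norm_num, ← integral_sq_shift]
    apply intervalIntegral.integral_congr
    intro x hx
    rw [Set.uIcc_of_le (by norm_num : (1:ℝ) ≤ 2)] at hx
    show (min x (2-x))^2 = (x-2)^2
    have : min x (2-x) = 2-x := min_eq_right (by linarith [hx.1, hx.2])
    rw [this]; ring
  have hint : ∀ u v : ℝ, IntervalIntegrable (fun x => (min x (2-x))^2)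
      MeasureTheory.volume u v := by
    intro u v
    apply Continuous.intervalIntegrable
    exact ((continuous_id.min (continuous_const.sub continuous_id)).pow 2)
  rw [← intervalIntegral.integral_add_adjacent_intervals (hint 0 1) (hint 1 2), h1, h2]
  norm_num

lemma lower_bound (k : ℕ) (hk : 3 ≤ k) (α : Finset (ℝ × ℝ)) (hsub : ↑α ⊆ S1 ∪ S2)
    (h1 : 1 ≤ α.card) (h2 : α.card ≤ 2*k) :
    1/4 + 1/(48*(k:ℝ)^2) ≤ distortion α := by
  have hne : α.Nonempty := Finset.card_pos.1 h1
  set zf : ℝ × ℝ → ℝ := fun a => if a ∈ S1 then 4*a.1 else 4*a.1 - 6 with hzf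
  set Z := α.image zf with hZdef
  have hZne : Z.Nonempty := hne.image zf
  have hZcard : Z.card ≤ 2*k := le_trans (Finset.card_image_le) h2
  have hZ1 : 1 ≤ Z.card := Finset.card_pos.2 hZne
  -- pointwise bound
  have hptw : ∀ x ∈ Set.Icc (0:ℝ) 2,
      3/4*(min x (2-x))^2 + 1/4*del Z x
        ≤ sInf ((fun p : ℝ × ℝ => (x - p.1)^2 + p.2^2) '' (α : Set (ℝ × ℝ))) := by
    intro x hx
    apply le_csInf (hne.to_set.image _)
    rintro y ⟨p, hp, rfl⟩
    have hmin0 : 0 ≤ min x (2-x) := le_min hx.1 (by linarith [hx.2])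
    rcases Classical.em (p ∈ S1) with hp1 | hp1
    · obtain ⟨t, ht0, ht1, rfl⟩ := hp1
      have hmemS1 : (t, Real.sqrt 3 * t) ∈ S1 := ⟨t, ht0, ht1, rfl⟩
      have hmem : (4*t : ℝ) ∈ Z := by
        refine Finset.mem_image.2 ⟨(t, Real.sqrt 3 * t), hp, ?_⟩
        simp [hzf, hmemS1]
      have hdel : del Z x ≤ (x - 4*t)^2 := del_le hmem x
      have hm : (min x (2-x))^2 ≤ x^2 := pow_le_pow_left₀ hmin0 (min_le_left _ _) 2
      have heq : (x - t)^2 + (Real.sqrt 3 * t)^2 = 3/4*x^2 + 1/4*(x - 4*t)^2 := by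
        rw [mul_pow, sqrt3_sq]; ring
      simp only
      rw [heq]
      nlinarith
    · have hp2 : p ∈ S2 := (hsub hp).resolve_left hp1
      obtain ⟨s, hs1, hs2, rfl⟩ := hp2
      have hmem : (4*s - 6 : ℝ) ∈ Z := by
        refine Finset.mem_image.2 ⟨(s, -(Real.sqrt 3) * (s - 2)), hp, ?_⟩
        simp only [hzf]
        exact if_neg hp1
      have hdel : del Z x ≤ (x - (4*s-6))^2 := del_le hmem x
      have hm : (min x (2-x))^2 ≤ (2-x)^2 := pow_le_pow_left₀ hmin0 (min_le_right _ _) 2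
      have heq : (x - s)^2 + (-(Real.sqrt 3) * (s - 2))^2
          = 3/4*(2-x)^2 + 1/4*(x - (4*s-6))^2 := by
        rw [mul_pow, neg_pow, sqrt3_sq]; ring
      simp only
      rw [heq]
      nlinarith
  -- integrabilities
  have hcontG : Continuous (fun x : ℝ =>
      sInf ((fun p : ℝ × ℝ => (x - p.1)^2 + p.2^2) '' (α : Set (ℝ × ℝ)))) := by
    apply cont_sInf_image α hne (fun p x => (x - p.1)^2 + p.2^2)
    intro p
    continuity
  have hcontL : Continuous (fun x : ℝ => 3/4*(min x (2-x))^2 + 1/4*del Z x) := by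
    apply Continuous.add
    · exact continuous_const.mul ((continuous_id.min (continuous_const.sub continuous_id)).pow 2)
    · exact continuous_const.mul (cont_del Z hZne)
  -- integral comparison
  have hIm : (∫ x in (0:ℝ)..2, (3/4*(min x (2-x))^2 + 1/4*del Z x))
      ≤ ∫ x in (0:ℝ)..2,
        sInf ((fun p : ℝ × ℝ => (x - p.1)^2 + p.2^2) '' (α : Set (ℝ × ℝ))) := by
    apply intervalIntegral.integral_mono_on (by norm_num)
      (hcontL.intervalIntegrable 0 2) (hcontG.intervalIntegrable 0 2) hptw
  have hsplitL : (∫ x in (0:ℝ)..2, (3/4*(min x (2-x))^2 + 1/4*del Z x))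
      = 3/4*(∫ x in (0:ℝ)..2, (min x (2-x))^2) + 1/4*(∫ x in (0:ℝ)..2, del Z x) := by
    rw [intervalIntegral.integral_add, intervalIntegral.integral_const_mul,
      intervalIntegral.integral_const_mul]
    · exact (continuous_const.mul ((continuous_id.min (continuous_const.sub continuous_id)).pow 2)).intervalIntegrable 0 2
    · exact (continuous_const.mul (cont_del Z hZne)).intervalIntegrable 0 2
  have hq : (8:ℝ)/(12*(Z.card:ℝ)^2) ≤ ∫ x in (0:ℝ)..2, del Z x := by
    obtain ⟨n, hn⟩ : ∃ n, Z.card = n + 1 := ⟨Z.card - 1, by omega⟩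
    have := quantizer_bound n Z hn 0 2 (by norm_num)
    rw [hn]
    push_cast
    have e : ((2:ℝ)-0)^3/(12*((n:ℝ)+1)^2) = 8/(12*((n:ℝ)+1)^2) := by norm_num
    rw [e] at this
    exact this
  have hmono : (1:ℝ)/(6*(k:ℝ)^2) ≤ (8:ℝ)/(12*(Z.card:ℝ)^2) := by
    have hk0 : (0:ℝ) < (k:ℝ) := by positivity
    have hc0 : (0:ℝ) < (Z.card:ℝ) := by exact_mod_cast hZ1
    have hck : (Z.card:ℝ) ≤ 2*(k:ℝ) := by exact_mod_cast hZcard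
    rw [div_le_div_iff₀ (by positivity) (by positivity)]
    nlinarith
  have hk0 : (0:ℝ) < (k:ℝ) := by positivity
  have hdelI : (1:ℝ)/(6*(k:ℝ)^2) ≤ ∫ x in (0:ℝ)..2, del Z x := le_trans hmono hq
  have e2 : (1:ℝ)/(24*(k:ℝ)^2) = 1/4*(1/(6*(k:ℝ)^2)) := by
    field_simp
    ring
  have hfinal : 1/2 + 1/(24*(k:ℝ)^2)
      ≤ ∫ x in (0:ℝ)..2,
        sInf ((fun p : ℝ × ℝ => (x - p.1)^2 + p.2^2) '' (α : Set (ℝ × ℝ))) := by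
    calc 1/2 + 1/(24*(k:ℝ)^2) ≤ 3/4*(2/3) + 1/4*(∫ x in (0:ℝ)..2, del Z x) := by
          rw [e2]; linarith
      _ = 3/4*(∫ x in (0:ℝ)..2, (min x (2-x))^2) + 1/4*(∫ x in (0:ℝ)..2, del Z x) := by
          rw [integral_w_sq]
      _ = ∫ x in (0:ℝ)..2, (3/4*(min x (2-x))^2 + 1/4*del Z x) := hsplitL.symm
      _ ≤ _ := hIm
  rw [distortion]
  have e3 : (1:ℝ)/4 + 1/(48*(k:ℝ)^2) = 1/2*(1/2 + 1/(24*(k:ℝ)^2)) := by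
    field_simp
    ring
  rw [e3]
  have h2pos : (0:ℝ) < 1/2 := by norm_num
  exact mul_le_mul_of_nonneg_left hfinal (by norm_num)

section Upper
variable (k : ℕ)

noncomputable def tpar (j : ℕ) : ℝ := (2*(j:ℝ)+1)/(8*(k:ℝ))

noncomputable def optA : Finset (ℝ × ℝ) :=
  (Finset.range k).image (fun j => (tpar k j, Real.sqrt 3 * tpar k j)) ∪
  (Finset.range k).image (fun j => (2 - tpar k j, Real.sqrt 3 * tpar k j))

noncomputable def cellI (j : ℕ) : ℝ :=
  (12*(j:ℝ)^2 + 12*(j:ℝ) + 3)/(16*(k:ℝ)^3) + 1/(12*(k:ℝ)^3)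

end Upper

lemma optA_sub (k : ℕ) (hk : 3 ≤ k) : ↑(optA k) ⊆ S1 ∪ S2 := by
  have hk0 : (0:ℝ) < (k:ℝ) := by positivity
  intro p hp
  rw [optA] at hp
  simp only [Finset.coe_union, Set.mem_union, Finset.coe_image, Set.mem_image,
    Finset.mem_coe, Finset.mem_range] at hp
  have htb : ∀ j : ℕ, j < k → 0 ≤ tpar k j ∧ tpar k j ≤ 1 := by
    intro j hj
    constructor
    · rw [tpar]; positivity
    · rw [tpar]
      rw [div_le_one (by positivity)]
      have : (j:ℝ) ≤ (k:ℝ) - 1 := by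
        have : (j:ℝ) + 1 ≤ (k:ℝ) := by exact_mod_cast hj
        linarith
      linarith
  rcases hp with ⟨j, hj, rfl⟩ | ⟨j, hj, rfl⟩
  · left
    exact ⟨tpar k j, (htb j hj).1, (htb j hj).2, rfl⟩
  · right
    refine ⟨2 - tpar k j, by linarith [(htb j hj).2], by linarith [(htb j hj).1], ?_⟩
    have : -(Real.sqrt 3) * (2 - tpar k j - 2) = Real.sqrt 3 * tpar k j := by ring
    rw [this]

lemma optA_card (k : ℕ) : (optA k).card ≤ 2*k := by
  rw [optA]
  calc _ ≤ ((Finset.range k).image (fun j => (tpar k j, Real.sqrt 3 * tpar k j))).card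
      + ((Finset.range k).image (fun j => (2 - tpar k j, Real.sqrt 3 * tpar k j))).card :=
        Finset.card_union_le _ _
    _ ≤ k + k := add_le_add (le_trans Finset.card_image_le (by simp))
        (le_trans Finset.card_image_le (by simp))
    _ = 2*k := by ring

lemma optA_ne (k : ℕ) (hk : 3 ≤ k) : (optA k).Nonempty := by
  refine ⟨(tpar k 0, Real.sqrt 3 * tpar k 0), ?_⟩
  rw [optA]
  exact Finset.mem_union_left _ (Finset.mem_image.2 ⟨0, Finset.mem_range.2 (by omega), rfl⟩)

lemma sum_cellI (k : ℕ) (hk : 3 ≤ k) :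
    ∑ j ∈ Finset.range k, cellI k j = 1/4 + 1/(48*(k:ℝ)^2) := by
  have hk0 : ((k:ℝ)) ≠ 0 := by positivity
  have e : ∀ j ∈ Finset.range k, cellI k j
      = (3/(4*(k:ℝ)^3))*(j:ℝ)^2 + (3/(4*(k:ℝ)^3))*(j:ℝ) + (3/(16*(k:ℝ)^3) + 1/(12*(k:ℝ)^3)) := by
    intro j _
    rw [cellI]
    field_simp
    ring
  rw [Finset.sum_congr rfl e]
  rw [Finset.sum_add_distrib, Finset.sum_add_distrib, ← Finset.mul_sum, ← Finset.mul_sum,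
    Finset.sum_const, nsmul_eq_mul, Finset.card_range, sum_range_cast, sum_range_cast_sq]
  field_simp
  ring

lemma upper_bound (k : ℕ) (hk : 3 ≤ k) :
    distortion (optA k) ≤ 1/4 + 1/(48*(k:ℝ)^2) := by
  have hk0 : (0:ℝ) < (k:ℝ) := by positivity
  set G : ℝ → ℝ := fun x =>
    sInf ((fun p : ℝ × ℝ => (x - p.1)^2 + p.2^2) '' ((optA k) : Set (ℝ × ℝ))) with hG
  have hGcont : Continuous G := by
    apply cont_sInf_image (optA k) (optA_ne k hk) (fun p x => (x - p.1)^2 + p.2^2)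
    intro p; continuity
  have hGint : ∀ u v : ℝ, IntervalIntegrable G MeasureTheory.volume u v :=
    fun u v => hGcont.intervalIntegrable u v
  have hGle : ∀ (p : ℝ × ℝ), p ∈ optA k → ∀ x : ℝ, G x ≤ (x - p.1)^2 + p.2^2 := by
    intro p hp x
    exact csInf_le (((optA k).finite_toSet.image _).bddBelow) ⟨p, hp, rfl⟩
  -- left half
  have hleft : ∫ x in (0:ℝ)..1, G x ≤ ∑ j ∈ Finset.range k, cellI k j := by
    have hadj : ∑ j ∈ Finset.range k, (∫ x in ((j:ℝ)/k)..(((j:ℝ)+1)/k), G x)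
        = ∫ x in (0:ℝ)..1, G x := by
      have := intervalIntegral.sum_integral_adjacent_intervals
        (a := fun j : ℕ => (j:ℝ)/k) (n := k)
        (fun i _ => hGint _ _)
      simp only [Nat.cast_zero, Nat.cast_succ] at this ⊢
      rw [zero_div, div_self (ne_of_gt hk0)] at this
      exact this
    rw [← hadj]
    apply Finset.sum_le_sum
    intro j hj
    have hjk := Finset.mem_range.1 hj
    have hmem : (tpar k j, Real.sqrt 3 * tpar k j) ∈ optA k := by
      rw [optA]
      exact Finset.mem_union_left _ (Finset.mem_image.2 ⟨j, hj, rfl⟩)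
    have hcd : (j:ℝ)/k ≤ ((j:ℝ)+1)/k := by
      gcongr
      linarith
    calc ∫ x in ((j:ℝ)/k)..(((j:ℝ)+1)/k), G x
        ≤ ∫ x in ((j:ℝ)/k)..(((j:ℝ)+1)/k), ((x - tpar k j)^2 + 3*(tpar k j)^2) := by
          apply intervalIntegral.integral_mono_on hcd (hGint _ _)
            (by apply Continuous.intervalIntegrable; continuity)
          intro x _
          calc G x ≤ (x - tpar k j)^2 + (Real.sqrt 3 * tpar k j)^2 := by
                simpa using hGle _ hmem x
            _ = (x - tpar k j)^2 + 3*(tpar k j)^2 := by rw [mul_pow, sqrt3_sq]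
      _ = cellI k j := by
          rw [integral_sq_add_const, cellI, tpar]
          field_simp
          ring
  -- right half
  have hright : ∫ x in (1:ℝ)..2, G x ≤ ∑ j ∈ Finset.range k, cellI k j := by
    have hadj : ∑ j ∈ Finset.range k, (∫ x in (1+(j:ℝ)/k)..(1+((j:ℝ)+1)/k), G x)
        = ∫ x in (1:ℝ)..2, G x := by
      have := intervalIntegral.sum_integral_adjacent_intervals
        (a := fun j : ℕ => 1 + (j:ℝ)/k) (n := k)
        (fun i _ => hGint _ _)
      simp only [Nat.cast_zero, Nat.cast_succ] at this ⊢
      rw [zero_div, div_self (ne_of_gt hk0)] at this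
      norm_num at this
      exact this
    have hrefl : ∑ j ∈ Finset.range k, cellI k (k-1-j) = ∑ j ∈ Finset.range k, cellI k j := by
      have := Finset.sum_range_reflect (fun j => cellI k j) k
      simpa using this
    rw [← hadj, ← hrefl]
    apply Finset.sum_le_sum
    intro j hj
    have hjk := Finset.mem_range.1 hj
    set m := k - 1 - j with hmdef
    have hmk : m < k := by omega
    have hmem : (2 - tpar k m, Real.sqrt 3 * tpar k m) ∈ optA k := by
      rw [optA]
      exact Finset.mem_union_right _ (Finset.mem_image.2 ⟨m, Finset.mem_range.2 hmk, rfl⟩)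
    have hmcast : ((m:ℕ):ℝ) = (k:ℝ) - 1 - (j:ℝ) := by
      rw [hmdef]
      have h1 : ((k - 1 - j : ℕ):ℝ) = ((k - 1:ℕ):ℝ) - (j:ℝ) := by
        rw [Nat.cast_sub (by omega : j ≤ k - 1)]
      rw [h1, Nat.cast_sub (by omega : 1 ≤ k)]
      norm_num
    have hcd : 1+(j:ℝ)/k ≤ 1+((j:ℝ)+1)/k := by
      have : (j:ℝ)/k ≤ ((j:ℝ)+1)/k := by
        gcongr
        linarith
      linarith
    calc ∫ x in (1+(j:ℝ)/k)..(1+((j:ℝ)+1)/k), G x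
        ≤ ∫ x in (1+(j:ℝ)/k)..(1+((j:ℝ)+1)/k), ((x - (2 - tpar k m))^2 + 3*(tpar k m)^2) := by
          apply intervalIntegral.integral_mono_on hcd (hGint _ _)
            (by apply Continuous.intervalIntegrable; continuity)
          intro x _
          calc G x ≤ (x - (2 - tpar k m))^2 + (Real.sqrt 3 * tpar k m)^2 := by
                simpa using hGle _ hmem x
            _ = (x - (2 - tpar k m))^2 + 3*(tpar k m)^2 := by rw [mul_pow, sqrt3_sq]
      _ = cellI k m := by
          rw [integral_sq_add_const, cellI, tpar, hmcast]
          field_simp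
          ring
  -- combine
  have hsplit : (∫ x in (0:ℝ)..1, G x) + (∫ x in (1:ℝ)..2, G x) = ∫ x in (0:ℝ)..2, G x :=
    intervalIntegral.integral_add_adjacent_intervals (hGint 0 1) (hGint 1 2)
  have hS := sum_cellI k hk
  rw [distortion]
  have htot : (∫ x in (0:ℝ)..2, G x) ≤ 2*(1/4 + 1/(48*(k:ℝ)^2)) := by
    rw [← hsplit]
    rw [hS] at hleft hright
    linarith
  calc (1/2) * ∫ x in (0:ℝ)..2, G x ≤ (1/2)*(2*(1/4 + 1/(48*(k:ℝ)^2))) := by linarith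
    _ = 1/4 + 1/(48*(k:ℝ)^2) := by ring

lemma distortion_nonneg (β : Finset (ℝ × ℝ)) (hne : β.Nonempty) : 0 ≤ distortion β := by
  rw [distortion]
  apply mul_nonneg (by norm_num)
  apply intervalIntegral.integral_nonneg (by norm_num)
  intro x _
  apply le_csInf (hne.to_set.image _)
  rintro y ⟨p, hp, rfl⟩
  positivity

/-- For even n = 2k with k ≥ 3, Vₙ = (1/48)(12 + 1/k²) = 1/4 + 1/(48k²). -/
theorem stmt16 (k : ℕ) (hk : 3 ≤ k) :
    V (2 * k) = (1/48) * (12 + 1/(k:ℝ)^2) ∧ V (2 * k) = 1/4 + 1/(48 * (k:ℝ)^2) := by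
  have hk0 : (0:ℝ) < (k:ℝ) := by positivity
  have hcard1 : 1 ≤ (optA k).card := Finset.card_pos.2 (optA_ne k hk)
  have hmem : distortion (optA k) ∈
      {v | ∃ α : Finset (ℝ × ℝ), ↑α ⊆ S1 ∪ S2 ∧ 1 ≤ α.card ∧ α.card ≤ 2*k ∧ v = distortion α} :=
    ⟨optA k, optA_sub k hk, hcard1, optA_card k, rfl⟩
  have hbdd : BddBelow
      {v | ∃ α : Finset (ℝ × ℝ), ↑α ⊆ S1 ∪ S2 ∧ 1 ≤ α.card ∧ α.card ≤ 2*k ∧ v = distortion α} := by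
    refine ⟨0, ?_⟩
    rintro v ⟨β, hs, h1, h2, rfl⟩
    exact distortion_nonneg β (Finset.card_pos.1 h1)
  have hc : V (2*k) = 1/4 + 1/(48*(k:ℝ)^2) := by
    rw [V]
    apply le_antisymm
    · exact le_trans (csInf_le hbdd hmem) (upper_bound k hk)
    · apply le_csInf ⟨_, hmem⟩
      rintro v ⟨β, hs, h1, h2, rfl⟩
      exact lower_bound k hk β hs h1 h2
  refine ⟨?_, hc⟩
  rw [hc]
  field_simp
  ring
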